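/- If (a, a'), (b, b'), (c, c') are three pairs of vectors in ℂ², each pair linearly independent, then the tensor a'⊗b⊗c + a⊗b'⊗c + a⊗b⊗c' ∈ ℂ² ⊗ ℂ² ⊗ ℂ² is SLOCC-equivalent to W = e₁⊗e₀⊗e₀ + e₀⊗e₁⊗e₀ + e₀⊗e₀⊗e₁. (A generic tangent vector to the Segre variety lies in the W orbit.) -/

import Mathlib

open TensorProduct

noncomputable section

/-- The single-qubit space ℂ². -/
abbrev Qubit : Type := Fin 2 → ℂ

/-- The three-qubit Hilbert space ℂ² ⊗ ℂ² ⊗ ℂ². -/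
abbrev ThreeQubit : Type := Qubit ⊗[ℂ] (Qubit ⊗[ℂ] Qubit)

/-- Standard basis vector e₀ of ℂ². -/
def e0 : Qubit := ![1, 0]

/-- Standard basis vector e₁ of ℂ². -/
def e1 : Qubit := ![0, 1]

/-- SLOCC equivalence: ψ and φ are related by invertible local linear maps. -/
def SLOCC (ψ φ : ThreeQubit) : Prop :=
  ∃ g₁ g₂ g₃ : Qubit ≃ₗ[ℂ] Qubit,
    TensorProduct.map g₁.toLinearMap
      (TensorProduct.map g₂.toLinearMap g₃.toLinearMap) ψ = φ

def SepState : ThreeQubit := e0 ⊗ₜ[ℂ] (e0 ⊗ₜ[ℂ] e0)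
def B1 : ThreeQubit := e0 ⊗ₜ[ℂ] (e0 ⊗ₜ[ℂ] e0) + e0 ⊗ₜ[ℂ] (e1 ⊗ₜ[ℂ] e1)
def B2 : ThreeQubit := e0 ⊗ₜ[ℂ] (e0 ⊗ₜ[ℂ] e0) + e1 ⊗ₜ[ℂ] (e0 ⊗ₜ[ℂ] e1)
def B3 : ThreeQubit := e0 ⊗ₜ[ℂ] (e0 ⊗ₜ[ℂ] e0) + e1 ⊗ₜ[ℂ] (e1 ⊗ₜ[ℂ] e0)
def W : ThreeQubit := e1 ⊗ₜ[ℂ] (e0 ⊗ₜ[ℂ] e0) + e0 ⊗ₜ[ℂ] (e1 ⊗ₜ[ℂ] e0) + e0 ⊗ₜ[ℂ] (e0 ⊗ₜ[ℂ] e1)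
def GHZ : ThreeQubit := e0 ⊗ₜ[ℂ] (e0 ⊗ₜ[ℂ] e0) + e1 ⊗ₜ[ℂ] (e1 ⊗ₜ[ℂ] e1)

def stdB : Module.Basis (Fin 2) ℂ Qubit := Pi.basisFun ℂ (Fin 2)

lemma stdB0 : stdB 0 = e0 := by
  funext i; fin_cases i <;> simp [stdB, e0, Pi.basisFun_apply]
lemma stdB1 : stdB 1 = e1 := by
  funext i; fin_cases i <;> simp [stdB, e1, Pi.basisFun_apply]

def mkEquiv (v : Fin 2 → Qubit) (hv : LinearIndependent ℂ v) : Qubit ≃ₗ[ℂ] Qubit :=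
  (basisOfLinearIndependentOfCardEqFinrank hv (by simp)).equiv stdB (Equiv.refl _)

lemma mkEquiv_apply (v : Fin 2 → Qubit) (hv : LinearIndependent ℂ v) (i : Fin 2) :
    mkEquiv v hv (v i) = stdB i := by
  have : v i = basisOfLinearIndependentOfCardEqFinrank hv (by simp) i := by
    simp [coe_basisOfLinearIndependentOfCardEqFinrank]
  rw [this, mkEquiv, Module.Basis.equiv_apply, Equiv.refl_apply]

/-- A generic tangent vector to the Segre variety lies in the W orbit:
if (a,a'), (b,b'), (c,c') are linearly independent pairs then
a'⊗b⊗c + a⊗b'⊗c + a⊗b⊗c' is SLOCC-equivalent to the W state. -/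
theorem generic_tangent_is_W (a a' b b' c c' : Qubit)
    (ha : LinearIndependent ℂ ![a, a']) (hb : LinearIndependent ℂ ![b, b'])
    (hc : LinearIndependent ℂ ![c, c']) :
    SLOCC (a' ⊗ₜ[ℂ] (b ⊗ₜ[ℂ] c) + a ⊗ₜ[ℂ] (b' ⊗ₜ[ℂ] c) + a ⊗ₜ[ℂ] (b ⊗ₜ[ℂ] c')) W := by
  refine ⟨mkEquiv _ ha, mkEquiv _ hb, mkEquiv _ hc, ?_⟩
  have ha0 : mkEquiv _ ha a = e0 := by simpa [stdB0] using mkEquiv_apply ![a, a'] ha 0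
  have ha1 : mkEquiv _ ha a' = e1 := by simpa [stdB1] using mkEquiv_apply ![a, a'] ha 1
  have hb0 : mkEquiv _ hb b = e0 := by simpa [stdB0] using mkEquiv_apply ![b, b'] hb 0
  have hb1 : mkEquiv _ hb b' = e1 := by simpa [stdB1] using mkEquiv_apply ![b, b'] hb 1
  have hc0 : mkEquiv _ hc c = e0 := by simpa [stdB0] using mkEquiv_apply ![c, c'] hc 0
  have hc1 : mkEquiv _ hc c' = e1 := by simpa [stdB1] using mkEquiv_apply ![c, c'] hc 1
  simp [map_add, TensorProduct.map_tmul, ha0, ha1, hb0, hb1, hc0, hc1, W]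

end
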